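/- Fix k ∈ ℝ with k ≠ 0. Let h : ℝ² → ℝ be C³, let A : ℝ² → ℝ² be an invertible linear map, and let x ∈ ℝ² satisfy K₂(h)(A x) ≠ 0 and h(A x) ≠ 0. Then for every X ∈ ℝ²: λ(h ∘ A)(x)(X) = λ(h)(A x)(A X), where λ(h)(x)(X) = (K₃(h)(x)/(3·K₂(h)(x))) · ρ_x(X)/(k·h(x)). -/

import Mathlib

/-- First partial derivative of `h : ℝ² → ℝ` in the `i`-th coordinate direction. -/
noncomputable def pd1 (h : (Fin 2 → ℝ) → ℝ) (i : Fin 2) (x : Fin 2 → ℝ) : ℝ :=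
  fderiv ℝ h x (Pi.single i 1)

/-- Second partial derivative of `h : ℝ² → ℝ`. -/
noncomputable def pd2 (h : (Fin 2 → ℝ) → ℝ) (i j : Fin 2) (x : Fin 2 → ℝ) : ℝ :=
  iteratedFDeriv ℝ 2 h x ![Pi.single i 1, Pi.single j 1]

/-- Third partial derivative of `h : ℝ² → ℝ`. -/
noncomputable def pd3 (h : (Fin 2 → ℝ) → ℝ) (i j m : Fin 2) (x : Fin 2 → ℝ) : ℝ :=
  iteratedFDeriv ℝ 3 h x ![Pi.single i 1, Pi.single j 1, Pi.single m 1]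

/-- `K₂(h) = (1/2)(h₁₁h₂² − 2h₁₂h₁h₂ + h₂₂h₁²)`. -/
noncomputable def K2 (h : (Fin 2 → ℝ) → ℝ) (x : Fin 2 → ℝ) : ℝ :=
  (1 / 2) * (pd2 h 0 0 x * (pd1 h 1 x) ^ 2 - 2 * pd2 h 0 1 x * pd1 h 0 x * pd1 h 1 x +
    pd2 h 1 1 x * (pd1 h 0 x) ^ 2)

/-- `K₃(h) = (1/6)(h₁₁₁h₂³ − 3h₁₁₂h₂²h₁ + 3h₁₂₂h₂h₁² − h₂₂₂h₁³)`. -/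
noncomputable def K3 (h : (Fin 2 → ℝ) → ℝ) (x : Fin 2 → ℝ) : ℝ :=
  (1 / 6) * (pd3 h 0 0 0 x * (pd1 h 1 x) ^ 3 -
    3 * pd3 h 0 0 1 x * (pd1 h 1 x) ^ 2 * pd1 h 0 x +
    3 * pd3 h 0 1 1 x * pd1 h 1 x * (pd1 h 0 x) ^ 2 -
    pd3 h 1 1 1 x * (pd1 h 0 x) ^ 3)

/-- The paper's invariant 1-form `λ(h)(x)(X) = (K₃(h)(x)/(3K₂(h)(x))) · ρ_x(X)/(k·h(x))`,
where `ρ_x(X) = x₂X₁ − x₁X₂`. -/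
noncomputable def lam (k : ℝ) (h : (Fin 2 → ℝ) → ℝ) (x X : Fin 2 → ℝ) : ℝ :=
  (K3 h x / (3 * K2 h x)) * (x 1 * X 0 - x 0 * X 1) / (k * h x)

section
variable {F : Type*} [NormedAddCommGroup F] [NormedSpace ℝ F]

lemma iter2_apply (f : (Fin 2 → ℝ) → F) (z u v : Fin 2 → ℝ) :
    iteratedFDeriv ℝ 2 f z ![u, v] = fderiv ℝ (fderiv ℝ f) z u v := by
  rw [iteratedFDeriv_two_apply]; simp

lemma iter3_apply (f : (Fin 2 → ℝ) → F) (z u v w : Fin 2 → ℝ) :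
    iteratedFDeriv ℝ 3 f z ![u, v, w] = fderiv ℝ (fderiv ℝ (fderiv ℝ f)) z u v w := by
  rw [iteratedFDeriv_succ_apply_right]
  have h1 : Fin.init ![u, v, w] = ![u, v] := by funext s; fin_cases s <;> rfl
  rw [h1, iter2_apply]; rfl

lemma D2_symm (f : (Fin 2 → ℝ) → F) (hf : ContDiff ℝ 2 f) (z u v : Fin 2 → ℝ) :
    fderiv ℝ (fderiv ℝ f) z u v = fderiv ℝ (fderiv ℝ f) z v u :=
  (hf.contDiffAt.isSymmSndFDerivAt (by simp [minSmoothness_of_isRCLikeNormedField])) u v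

end

lemma D3_symm12 (f : (Fin 2 → ℝ) → ℝ) (hf : ContDiff ℝ 3 f) (z u v w : Fin 2 → ℝ) :
    fderiv ℝ (fderiv ℝ (fderiv ℝ f)) z u v w = fderiv ℝ (fderiv ℝ (fderiv ℝ f)) z v u w := by
  have hg : ContDiff ℝ 2 (fderiv ℝ f) := hf.fderiv_right (by norm_num)
  have := ((hg.contDiffAt (x := z)).isSymmSndFDerivAt (by simp [minSmoothness_of_isRCLikeNormedField])) u v
  exact DFunLike.congr_fun this w

lemma D3_symm23 (f : (Fin 2 → ℝ) → ℝ) (hf : ContDiff ℝ 3 f) (z u v w : Fin 2 → ℝ) :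
    fderiv ℝ (fderiv ℝ (fderiv ℝ f)) z u v w = fderiv ℝ (fderiv ℝ (fderiv ℝ f)) z u w v := by
  have hd : DifferentiableAt ℝ (iteratedFDeriv ℝ 2 f) z :=
    hf.differentiable_iteratedFDeriv (by norm_num) z
  have key : (fun y => iteratedFDeriv ℝ 2 f y ![v, w]) = (fun y => iteratedFDeriv ℝ 2 f y ![w, v]) := by
    funext y; rw [iter2_apply, iter2_apply]; exact D2_symm f (hf.of_le (by norm_num)) y v w
  have t1 : Fin.tail ![u, v, w] = ![v, w] := by funext s; fin_cases s <;> rfl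
  have t2 : Fin.tail ![u, w, v] = ![w, v] := by funext s; fin_cases s <;> rfl
  rw [← iter3_apply, ← iter3_apply, iteratedFDeriv_succ_apply_left, iteratedFDeriv_succ_apply_left,
    t1, t2, ← fderiv_continuousMultilinear_apply_const_apply hd,
    ← fderiv_continuousMultilinear_apply_const_apply hd, key]
  rfl

lemma comp1 (f : (Fin 2 → ℝ) → ℝ) (hf : ContDiff ℝ 3 f)
    (A : (Fin 2 → ℝ) →ₗ[ℝ] (Fin 2 → ℝ)) (z u : Fin 2 → ℝ) :
    fderiv ℝ (fun y => f (A y)) z u = fderiv ℝ f (A z) (A u) := by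
  set B := LinearMap.toContinuousLinearMap A with hB
  have hcoe : ∀ v, A v = B v := fun v => rfl
  simp only [hcoe]
  have : fderiv ℝ (f ∘ B) z = (fderiv ℝ f (B z)).comp B :=
    ((hf.differentiable (by norm_num) (B z)).hasFDerivAt.comp z B.hasFDerivAt).fderiv
  rw [show (fun y => f (B y)) = f ∘ B from rfl, this]; rfl

lemma comp2 (f : (Fin 2 → ℝ) → ℝ) (hf : ContDiff ℝ 3 f)
    (A : (Fin 2 → ℝ) →ₗ[ℝ] (Fin 2 → ℝ)) (z u v : Fin 2 → ℝ) :
    iteratedFDeriv ℝ 2 (fun y => f (A y)) z ![u, v] =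
      iteratedFDeriv ℝ 2 f (A z) ![A u, A v] := by
  set B := LinearMap.toContinuousLinearMap A with hB
  have hcoe : ∀ v, A v = B v := fun v => rfl
  simp only [hcoe]
  rw [show (fun y => f (B y)) = f ∘ B from rfl,
    B.iteratedFDeriv_comp_right hf z (by norm_num),
    ContinuousMultilinearMap.compContinuousLinearMap_apply]
  congr 1
  funext s; fin_cases s <;> rfl

lemma comp3 (f : (Fin 2 → ℝ) → ℝ) (hf : ContDiff ℝ 3 f)
    (A : (Fin 2 → ℝ) →ₗ[ℝ] (Fin 2 → ℝ)) (z u v w : Fin 2 → ℝ) :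
    iteratedFDeriv ℝ 3 (fun y => f (A y)) z ![u, v, w] =
      iteratedFDeriv ℝ 3 f (A z) ![A u, A v, A w] := by
  set B := LinearMap.toContinuousLinearMap A with hB
  have hcoe : ∀ v, A v = B v := fun v => rfl
  simp only [hcoe]
  rw [show (fun y => f (B y)) = f ∘ B from rfl,
    B.iteratedFDeriv_comp_right hf z (by norm_num),
    ContinuousMultilinearMap.compContinuousLinearMap_apply]
  congr 1
  funext s; fin_cases s <;> rfl

/-- Invariance of the 1-form `λ = (1/3)(K₃/K₂)·ρ/(ku)` under linear changes of variables:
`λ(h∘A)(x)(X) = λ(h)(Ax)(AX)`. -/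
theorem lam_invariance (k : ℝ) (hk : k ≠ 0) (h : (Fin 2 → ℝ) → ℝ) (hh : ContDiff ℝ 3 h)
    (A : (Fin 2 → ℝ) →ₗ[ℝ] (Fin 2 → ℝ)) (hA : LinearMap.det A ≠ 0)
    (x : Fin 2 → ℝ) (hx2 : K2 h (A x) ≠ 0) (hxh : h (A x) ≠ 0) (X : Fin 2 → ℝ) :
    lam k (fun y => h (A y)) x X = lam k h (A x) (A X) := by
  have vdecomp : ∀ v : Fin 2 → ℝ, v = v 0 • (Pi.single 0 1 : Fin 2 → ℝ) + v 1 • (Pi.single 1 1 : Fin 2 → ℝ) := by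
    intro v; funext s; fin_cases s <;> simp
  obtain ⟨a, c, ha, hc⟩ : ∃ a c, A (Pi.single 0 1) 0 = a ∧ A (Pi.single 0 1) 1 = c :=
    ⟨_, _, rfl, rfl⟩
  obtain ⟨b, d, hb, hd⟩ : ∃ b d, A (Pi.single 1 1) 0 = b ∧ A (Pi.single 1 1) 1 = d :=
    ⟨_, _, rfl, rfl⟩
  have hA0 : A (Pi.single 0 1) = a • (Pi.single 0 1 : Fin 2 → ℝ) + c • (Pi.single 1 1 : Fin 2 → ℝ) := by
    rw [← ha, ← hc]; exact vdecomp _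
  have hA1 : A (Pi.single 1 1) = b • (Pi.single 0 1 : Fin 2 → ℝ) + d • (Pi.single 1 1 : Fin 2 → ℝ) := by
    rw [← hb, ← hd]; exact vdecomp _
  have hAv0 : ∀ v : Fin 2 → ℝ, A v 0 = v 0 * a + v 1 * b := by
    intro v
    conv_lhs => rw [vdecomp v, map_add, map_smul, map_smul, hA0, hA1]
    simp [smul_eq_mul]
  have hAv1 : ∀ v : Fin 2 → ℝ, A v 1 = v 0 * c + v 1 * d := by
    intro v
    conv_lhs => rw [vdecomp v, map_add, map_smul, map_smul, hA0, hA1]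
    simp [smul_eq_mul]
  have hdet : a * d - b * c ≠ 0 := by
    intro hcon; apply hA
    have hm : ∀ i j : Fin 2, LinearMap.toMatrix' A i j = A (Pi.single j 1) i := by
      intro i j; rw [LinearMap.toMatrix'_apply]
    rw [← LinearMap.det_toMatrix' A, Matrix.det_fin_two, hm, hm, hm, hm, ha, hb, hc, hd]
    linarith
  -- conversions to nested fderiv
  have d2 : ∀ p q : Fin 2, fderiv ℝ (fderiv ℝ h) (A x) (Pi.single p 1) (Pi.single q 1)
      = pd2 h p q (A x) := by
    intro p q; rw [pd2, iter2_apply]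
  have d3 : ∀ p q r : Fin 2,
      fderiv ℝ (fderiv ℝ (fderiv ℝ h)) (A x) (Pi.single p 1) (Pi.single q 1) (Pi.single r 1)
      = pd3 h p q r (A x) := by
    intro p q r; rw [pd3, iter3_apply]
  -- symmetry sorting
  have s10 : pd2 h 1 0 (A x) = pd2 h 0 1 (A x) := by
    rw [← d2, ← d2]; exact D2_symm h (hh.of_le (by norm_num)) _ _ _
  have w12 : ∀ p q r : Fin 2, pd3 h p q r (A x) = pd3 h q p r (A x) := by
    intro p q r; rw [← d3, ← d3]; exact D3_symm12 h hh _ _ _ _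
  have w23 : ∀ p q r : Fin 2, pd3 h p q r (A x) = pd3 h p r q (A x) := by
    intro p q r; rw [← d3, ← d3]; exact D3_symm23 h hh _ _ _ _
  have s010 : pd3 h 0 1 0 (A x) = pd3 h 0 0 1 (A x) := w23 0 1 0
  have s100 : pd3 h 1 0 0 (A x) = pd3 h 0 0 1 (A x) := (w12 1 0 0).trans s010
  have s101 : pd3 h 1 0 1 (A x) = pd3 h 0 1 1 (A x) := w12 1 0 1
  have s110 : pd3 h 1 1 0 (A x) = pd3 h 0 1 1 (A x) := (w23 1 1 0).trans s101
  -- first derivatives of the composition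
  have p0 : pd1 (fun y => h (A y)) 0 x = a * pd1 h 0 (A x) + c * pd1 h 1 (A x) := by
    rw [pd1, comp1 h hh A, hA0]
    simp only [map_add, map_smul, smul_eq_mul, pd1]
  have p1 : pd1 (fun y => h (A y)) 1 x = b * pd1 h 0 (A x) + d * pd1 h 1 (A x) := by
    rw [pd1, comp1 h hh A, hA1]
    simp only [map_add, map_smul, smul_eq_mul, pd1]
  -- second derivatives of the composition
  have q00 : pd2 (fun y => h (A y)) 0 0 x =
      a^2 * pd2 h 0 0 (A x) + 2*a*c * pd2 h 0 1 (A x) + c^2 * pd2 h 1 1 (A x) := by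
    rw [pd2, comp2 h hh A, hA0, iter2_apply]
    simp only [map_add, map_smul, ContinuousLinearMap.add_apply,
      ContinuousLinearMap.smul_apply, smul_eq_mul, d2, s10]
    ring
  have q01 : pd2 (fun y => h (A y)) 0 1 x =
      a*b * pd2 h 0 0 (A x) + (a*d + b*c) * pd2 h 0 1 (A x) + c*d * pd2 h 1 1 (A x) := by
    rw [pd2, comp2 h hh A, hA0, hA1, iter2_apply]
    simp only [map_add, map_smul, ContinuousLinearMap.add_apply,
      ContinuousLinearMap.smul_apply, smul_eq_mul, d2, s10]
    ring
  have q11 : pd2 (fun y => h (A y)) 1 1 x =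
      b^2 * pd2 h 0 0 (A x) + 2*b*d * pd2 h 0 1 (A x) + d^2 * pd2 h 1 1 (A x) := by
    rw [pd2, comp2 h hh A, hA1, iter2_apply]
    simp only [map_add, map_smul, ContinuousLinearMap.add_apply,
      ContinuousLinearMap.smul_apply, smul_eq_mul, d2, s10]
    ring
  -- third derivatives of the composition
  have r000 : pd3 (fun y => h (A y)) 0 0 0 x =
      a^3 * pd3 h 0 0 0 (A x) + 3*a^2*c * pd3 h 0 0 1 (A x) +
      3*a*c^2 * pd3 h 0 1 1 (A x) + c^3 * pd3 h 1 1 1 (A x) := by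
    rw [pd3, comp3 h hh A, hA0, iter3_apply]
    simp only [map_add, map_smul, ContinuousLinearMap.add_apply,
      ContinuousLinearMap.smul_apply, smul_eq_mul, d3, s010, s100, s101, s110]
    ring
  have r001 : pd3 (fun y => h (A y)) 0 0 1 x =
      a^2*b * pd3 h 0 0 0 (A x) + (a^2*d + 2*a*b*c) * pd3 h 0 0 1 (A x) +
      (b*c^2 + 2*a*c*d) * pd3 h 0 1 1 (A x) + c^2*d * pd3 h 1 1 1 (A x) := by
    rw [pd3, comp3 h hh A, hA0, hA1, iter3_apply]
    simp only [map_add, map_smul, ContinuousLinearMap.add_apply,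
      ContinuousLinearMap.smul_apply, smul_eq_mul, d3, s010, s100, s101, s110]
    ring
  have r011 : pd3 (fun y => h (A y)) 0 1 1 x =
      a*b^2 * pd3 h 0 0 0 (A x) + (2*a*b*d + b^2*c) * pd3 h 0 0 1 (A x) +
      (a*d^2 + 2*b*c*d) * pd3 h 0 1 1 (A x) + c*d^2 * pd3 h 1 1 1 (A x) := by
    rw [pd3, comp3 h hh A, hA0, hA1, iter3_apply]
    simp only [map_add, map_smul, ContinuousLinearMap.add_apply,
      ContinuousLinearMap.smul_apply, smul_eq_mul, d3, s010, s100, s101, s110]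
    ring
  have r111 : pd3 (fun y => h (A y)) 1 1 1 x =
      b^3 * pd3 h 0 0 0 (A x) + 3*b^2*d * pd3 h 0 0 1 (A x) +
      3*b*d^2 * pd3 h 0 1 1 (A x) + d^3 * pd3 h 1 1 1 (A x) := by
    rw [pd3, comp3 h hh A, hA1, iter3_apply]
    simp only [map_add, map_smul, ContinuousLinearMap.add_apply,
      ContinuousLinearMap.smul_apply, smul_eq_mul, d3, s010, s100, s101, s110]
    ring
  -- covariance of K2 and K3
  have hK2L : K2 (fun y => h (A y)) x = (a*d - b*c)^2 * K2 h (A x) := by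
    simp only [K2, p0, p1, q00, q01, q11]; ring
  have hK3L : K3 (fun y => h (A y)) x = (a*d - b*c)^3 * K3 h (A x) := by
    simp only [K3, p0, p1, r000, r001, r011, r111]; ring
  -- assemble
  simp only [lam, hK2L, hK3L, hAv0, hAv1]
  have h3 : (3:ℝ) ≠ 0 := by norm_num
  field_simp
  ring
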